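/- Let p, q, r, s be primes congruent to 1 modulo 4. If the quadruple (p,q,r,s) is bad, then t_p + t_q = t_r + t_s and Δ_{ip} + Δ_{iq} = Δ_{ir} + Δ_{is} for every integer i ≥ 1. Conversely, if t_p + t_q = t_r + t_s and Δ_{ip} + Δ_{iq} = Δ_{ir} + Δ_{is} for all i ≥ 1, then a_p + a_q = a_r + a_s. -/

import Mathlib

/-- `m_p := ⌊2^{K_p²}·α·φ_p⌋`. -/
noncomputable def mfun (φ : ℕ → ℝ) (Kp : ℕ → ℕ) (α : ℝ) (p : ℕ) : ℕ :=
  ⌊(2 : ℝ) ^ ((Kp p) ^ 2) * α * φ p⌋₊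

/-- `δ_{ip}`: the binary digit of `m_p` of weight `2^{K_p² − i}` (for `1 ≤ i ≤ K_p²`). -/
noncomputable def dig (φ : ℕ → ℝ) (Kp : ℕ → ℕ) (α : ℝ) (i p : ℕ) : ℕ :=
  mfun φ Kp α p / 2 ^ ((Kp p) ^ 2 - i) % 2

/-- `Δ_{ip} := Σ_{j=(i−1)²+1}^{i²} δ_{jp}·2^{i²−j}` for `1 ≤ i ≤ K_p`, and `0` for `i > K_p`. -/
noncomputable def Blk (φ : ℕ → ℝ) (Kp : ℕ → ℕ) (α : ℝ) (i p : ℕ) : ℕ :=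
  if i ≤ Kp p then ∑ j ∈ Finset.Icc ((i - 1) ^ 2 + 1) (i ^ 2), dig φ Kp α j p * 2 ^ (i ^ 2 - j)
  else 0

/-- `t_p := 2^{K_p² + 3K_p + 2}`. -/
def tfun (Kp : ℕ → ℕ) (p : ℕ) : ℕ := 2 ^ ((Kp p) ^ 2 + 3 * Kp p + 2)

/-- `a_p := Σ_{i=1}^{K_p} Δ_{ip}·2^{(i−1)²+3i} + t_p`. -/
noncomputable def afun (φ : ℕ → ℝ) (Kp : ℕ → ℕ) (α : ℝ) (p : ℕ) : ℕ :=
  (∑ i ∈ Finset.Icc 1 (Kp p), Blk φ Kp α i p * 2 ^ ((i - 1) ^ 2 + 3 * i)) + tfun Kp p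

/-- A quadruple `(p,q,r,s)` is bad (w.r.t. `α`) if `a_p + a_q = a_r + a_s` and
`a_p > a_r ≥ a_s > a_q`. -/
noncomputable def IsBad (φ : ℕ → ℝ) (Kp : ℕ → ℕ) (α : ℝ) (p q r s : ℕ) : Prop :=
  afun φ Kp α p + afun φ Kp α q = afun φ Kp α r + afun φ Kp α s ∧
  afun φ Kp α r < afun φ Kp α p ∧ afun φ Kp α s ≤ afun φ Kp α r ∧ afun φ Kp α q < afun φ Kp α s

/-- The hypothesis defining `φ_p = (1/π)·arctan(v_p/u_p)` for primes `p ≡ 1 (mod 4)`,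
where `p = u_p² + v_p²` with `u_p > v_p > 0`. -/
def PhiHyp (u v : ℕ → ℕ) (φ : ℕ → ℝ) : Prop :=
  ∀ p : ℕ, p.Prime → p % 4 = 1 →
    0 < v p ∧ v p < u p ∧ p = (u p) ^ 2 + (v p) ^ 2 ∧
    φ p = (1 / Real.pi) * Real.arctan ((v p : ℝ) / (u p : ℝ))

/-- The hypothesis defining `K_p`: the unique integer `K > 2` with
`2^{(K−2)²} < p^β < 2^{(K−1)²}`, for primes `p ≡ 1 (mod 4)`. -/
def KpHyp (β : ℝ) (Kp : ℕ → ℕ) : Prop :=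
  ∀ p : ℕ, p.Prime → p % 4 = 1 →
    2 < Kp p ∧ (2 : ℝ) ^ ((Kp p - 2) ^ 2) < (p : ℝ) ^ β ∧
      (p : ℝ) ^ β < (2 : ℝ) ^ ((Kp p - 1) ^ 2)

section AuxStmt6

def ffE (i : ℕ) : ℕ := (i - 1)^2 + 3*i
def ggE (K : ℕ) : ℕ := K^2 + 3*K + 2

lemma ffE_succ (i : ℕ) (hi : 1 ≤ i) : ffE (i+1) = ffE i + (2*i+2) := by
  obtain ⟨j, rfl⟩ : ∃ j, i = j + 1 := ⟨i - 1, by omega⟩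
  simp only [ffE, Nat.add_sub_cancel]
  ring

lemma ffE_gg (K : ℕ) (hK : 1 ≤ K) : ffE K + (2*K+1) = ggE K := by
  obtain ⟨j, rfl⟩ : ∃ j, K = j + 1 := ⟨K - 1, by omega⟩
  simp only [ffE, ggE, Nat.add_sub_cancel]
  ring

lemma ffE_succ_gg (K : ℕ) : ffE (K+1) = ggE K + 1 := by
  simp only [ffE, ggE, Nat.add_sub_cancel]; ring

lemma ggE_mono {a b : ℕ} (h : a < b) : ggE a + 4 ≤ ggE b := by
  have h1 : (a+1)^2 ≤ b^2 := Nat.pow_le_pow_left (by omega) 2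
  have h2 : (a+1)^2 = a^2 + 2*a + 1 := by ring
  simp only [ggE]; omega

lemma sumltE (D : ℕ → ℕ) (N : ℕ) (h : ∀ i ∈ Finset.Icc 1 N, D i < 2^(2*i+2)) :
    ∑ i ∈ Finset.Icc 1 N, D i * 2^(ffE i) < 2^(ffE (N+1)) := by
  induction N with
  | zero => simp [ffE]
  | succ n ih =>
    rw [Finset.sum_Icc_succ_top (by omega)]
    have h1 := ih (fun i hi => h i (by simp at hi ⊢; omega))
    have h2 : D (n+1) < 2^(2*(n+1)+2) := h (n+1) (by simp)
    have h3 : ffE (n+1+1) = ffE (n+1) + (2*(n+1)+2) := ffE_succ (n+1) (by omega)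
    have h4 : D (n+1) * 2^(ffE (n+1)) ≤ (2^(2*(n+1)+2) - 1) * 2^(ffE (n+1)) :=
      Nat.mul_le_mul_right _ (by omega)
    have h5 : 2^(ffE (n+1)) ≤ 2^(ffE (n+1+1)) := Nat.pow_le_pow_right (by norm_num) (by omega)
    have h6 : (2^(2*(n+1)+2) - 1) * 2^(ffE (n+1)) = 2^(ffE (n+1+1)) - 2^(ffE (n+1)) := by
      rw [h3, pow_add 2 (ffE (n+1)), Nat.sub_mul, one_mul, Nat.mul_comm]
    have h7 : 0 < 2^(ffE (n+1)) := Nat.pow_pos (by norm_num)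
    omega

lemma digit_uniqE {a b c d m : ℕ} (hm : 0 < m) (ha : a < m) (hb : b < m)
    (h : a + c * m = b + d * m) : a = b ∧ c = d := by
  have h1 : (a + c * m) % m = a := by
    rw [Nat.add_mul_mod_self_right, Nat.mod_eq_of_lt ha]
  have h2 : (b + d * m) % m = b := by
    rw [Nat.add_mul_mod_self_right, Nat.mod_eq_of_lt hb]
  have hab : a = b := by rw [← h1, h, h2]
  subst hab
  refine ⟨rfl, Nat.eq_of_mul_eq_mul_right hm (by omega : c * m = d * m)⟩

lemma uniqE (D D' : ℕ → ℕ) (N : ℕ)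
    (hD : ∀ i ∈ Finset.Icc 1 N, D i < 2^(2*i+2))
    (hD' : ∀ i ∈ Finset.Icc 1 N, D' i < 2^(2*i+2))
    (heq : ∑ i ∈ Finset.Icc 1 N, D i * 2^(ffE i) = ∑ i ∈ Finset.Icc 1 N, D' i * 2^(ffE i)) :
    ∀ i ∈ Finset.Icc 1 N, D i = D' i := by
  induction N with
  | zero => simp
  | succ n ih =>
    rw [Finset.sum_Icc_succ_top (by omega), Finset.sum_Icc_succ_top (by omega)] at heq
    have hS : ∑ i ∈ Finset.Icc 1 n, D i * 2^(ffE i) < 2^(ffE (n+1)) :=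
      sumltE D n (fun i hi => hD i (by simp at hi ⊢; omega))
    have hS' : ∑ i ∈ Finset.Icc 1 n, D' i * 2^(ffE i) < 2^(ffE (n+1)) :=
      sumltE D' n (fun i hi => hD' i (by simp at hi ⊢; omega))
    obtain ⟨hlow, htop⟩ := digit_uniqE (Nat.pow_pos (by norm_num)) hS hS' heq
    intro i hi
    rcases Finset.mem_Icc.mp hi with ⟨h1, h2⟩
    rcases Nat.lt_or_ge i (n+1) with h | h
    · exact ih (fun j hj => hD j (by simp at hj ⊢; omega))
        (fun j hj => hD' j (by simp at hj ⊢; omega)) hlow i (by simp; omega)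
    · have hin : i = n + 1 := by omega
      rw [hin]; exact htop

lemma two_pow_sumE (n : ℕ) : ∑ k ∈ Finset.range n, 2^k = 2^n - 1 := by
  induction n with
  | zero => simp
  | succ m ih =>
    rw [Finset.sum_range_succ, ih, pow_succ]
    have : 0 < 2^m := Nat.pow_pos (by norm_num)
    omega

lemma geom_auxE (n a : ℕ) (c : ℕ → ℕ) (hc : ∀ j, c j ≤ 1) :
    ∑ j ∈ Finset.Icc (a+1) (a+n), c j * 2^(a+n-j) < 2^n := by
  have h1 : ∑ j ∈ Finset.Icc (a+1) (a+n), c j * 2^(a+n-j)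
      ≤ ∑ j ∈ Finset.Icc (a+1) (a+n), 2^(a+n-j) := by
    apply Finset.sum_le_sum
    intro j _
    calc c j * 2^(a+n-j) ≤ 1 * 2^(a+n-j) := Nat.mul_le_mul_right _ (hc j)
    _ = 2^(a+n-j) := one_mul _
  have h2 : ∑ j ∈ Finset.Icc (a+1) (a+n), 2^(a+n-j)
      = ∑ k ∈ Finset.range n, 2^(n-1-k) := by
    rw [show Finset.Icc (a+1) (a+n) = Finset.Ico (a+1) (a+n+1) by
      rw [Finset.Ico_add_one_right_eq_Icc], Finset.sum_Ico_eq_sum_range]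
    have hn : a + n + 1 - (a+1) = n := by omega
    rw [hn]
    apply Finset.sum_congr rfl
    intro k hk
    simp only [Finset.mem_range] at hk
    congr 1
    omega
  have h3 : ∑ k ∈ Finset.range n, 2^(n-1-k) = ∑ k ∈ Finset.range n, 2^k := by
    have := Finset.sum_range_reflect (fun k => (2:ℕ)^k) n
    rw [← this]
  have h4 : (0:ℕ) < 2^n := Nat.pow_pos (by norm_num)
  rw [h2, h3, two_pow_sumE] at h1
  omega

end AuxStmt6

section AuxStmt6b

variable (φ : ℕ → ℝ) (Kp : ℕ → ℕ) (α : ℝ)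

lemma dig_le_oneE (j x : ℕ) : dig φ Kp α j x ≤ 1 :=
  Nat.le_of_lt_succ (Nat.mod_lt _ (by norm_num))

lemma blk_zeroE {i x : ℕ} (h : Kp x < i) : Blk φ Kp α i x = 0 := by
  rw [Blk, if_neg (by omega)]

lemma blk_ltE (i x : ℕ) (hi : 1 ≤ i) : Blk φ Kp α i x < 2^(2*i) := by
  rw [Blk]
  split
  · obtain ⟨J, rfl⟩ : ∃ J, i = J + 1 := ⟨i-1, by omega⟩
    have h0 : (J+1-1)^2 + 1 = J^2 + 1 := by norm_num
    have hsq : (J+1)^2 = J^2 + (2*J+1) := by ring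
    rw [h0, hsq]
    calc ∑ j ∈ Finset.Icc (J^2+1) (J^2+(2*J+1)), dig φ Kp α j x * 2^(J^2+(2*J+1) - j)
        < 2^(2*J+1) := geom_auxE (2*J+1) (J^2) _ (fun j => dig_le_oneE φ Kp α j x)
      _ ≤ 2^(2*(J+1)) := Nat.pow_le_pow_right (by norm_num) (by omega)
  · positivity

lemma tfun_ggE (x : ℕ) : tfun Kp x = 2^(ggE (Kp x)) := rfl

lemma afun_repE (x N : ℕ) (hN : Kp x ≤ N) :
    afun φ Kp α x = (∑ i ∈ Finset.Icc 1 N, Blk φ Kp α i x * 2^(ffE i)) + tfun Kp x := by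
  rw [afun]
  congr 1
  refine Finset.sum_subset (Finset.Icc_subset_Icc_right hN) ?_
  intro j hj hj2
  simp only [Finset.mem_Icc] at hj hj2
  rw [blk_zeroE φ Kp α (by omega), zero_mul]

lemma ite_sumE (K N : ℕ) (hK : 1 ≤ K) (hN : K ≤ N) :
    ∑ i ∈ Finset.Icc 1 N, (if i = K then 2^(2*i+1) else 0) * 2^(ffE i) = 2^(ggE K) := by
  have h1 : ∀ i, (if i = K then 2^(2*i+1) else 0) * 2^(ffE i)
      = if i = K then 2^(2*i+1) * 2^(ffE i) else 0 := by
    intro i; split <;> simp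
  simp only [h1]
  rw [Finset.sum_ite_eq' (Finset.Icc 1 N) K (fun i => 2^(2*i+1) * 2^(ffE i)),
    if_pos (Finset.mem_Icc.mpr ⟨hK, hN⟩), ← pow_add, ← ffE_gg K hK]
  ring_nf

/-- slot digits of `t_x + t_y` -/
def tdigE (Kx Ky i : ℕ) : ℕ :=
  if Kx = Ky then (if i = Kx + 1 then 1 else 0)
  else ((if i = Kx then 2^(2*i+1) else 0) + (if i = Ky then 2^(2*i+1) else 0))

lemma tdig_sumE (Kx Ky N : ℕ) (hx : 1 ≤ Kx) (hy : 1 ≤ Ky) (hNx : Kx + 1 ≤ N) (hNy : Ky + 1 ≤ N) :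
    ∑ i ∈ Finset.Icc 1 N, tdigE Kx Ky i * 2^(ffE i) = 2^(ggE Kx) + 2^(ggE Ky) := by
  unfold tdigE
  by_cases h : Kx = Ky
  · simp only [if_pos h]
    subst h
    have h1 : ∀ i, (if i = Kx + 1 then 1 else 0) * 2^(ffE i)
        = if i = Kx + 1 then 2^(ffE i) else 0 := by intro i; split <;> simp
    simp only [h1]
    rw [Finset.sum_ite_eq' (Finset.Icc 1 N) (Kx+1) (fun i => 2^(ffE i)),
      if_pos (Finset.mem_Icc.mpr ⟨by omega, hNx⟩), ffE_succ_gg]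
    ring
  · simp only [if_neg h, add_mul, Finset.sum_add_distrib]
    rw [ite_sumE Kx N hx (by omega), ite_sumE Ky N hy (by omega)]

lemma pair_repE (x y N : ℕ) (hx : 1 ≤ Kp x) (hy : 1 ≤ Kp y)
    (hNx : Kp x + 1 ≤ N) (hNy : Kp y + 1 ≤ N) :
    afun φ Kp α x + afun φ Kp α y =
      ∑ i ∈ Finset.Icc 1 N,
        (Blk φ Kp α i x + Blk φ Kp α i y + tdigE (Kp x) (Kp y) i) * 2^(ffE i) := by
  rw [afun_repE φ Kp α x N (by omega), afun_repE φ Kp α y N (by omega)]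
  simp only [add_mul, Finset.sum_add_distrib]
  rw [tdig_sumE (Kp x) (Kp y) N hx hy hNx hNy, tfun_ggE, tfun_ggE]
  ring

lemma pair_boundE (x y : ℕ) (i : ℕ) (hi : 1 ≤ i) :
    Blk φ Kp α i x + Blk φ Kp α i y + tdigE (Kp x) (Kp y) i < 2^(2*i+2) := by
  have hbx := blk_ltE φ Kp α i x hi
  have hby := blk_ltE φ Kp α i y hi
  have e1 : (2:ℕ)^(2*i+1) = 2 * 2^(2*i) := by rw [pow_succ]; ring
  have e2 : (2:ℕ)^(2*i+2) = 4 * 2^(2*i) := by rw [pow_add]; ring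
  unfold tdigE
  by_cases h : Kp x = Kp y
  · rw [if_pos h]
    by_cases h2 : i = Kp x + 1
    · rw [if_pos h2, blk_zeroE φ Kp α (x := x) (by omega),
        blk_zeroE φ Kp α (x := y) (by omega)]
      have : (0:ℕ) < 2^(2*i) := Nat.pow_pos (by norm_num)
      omega
    · rw [if_neg h2]; omega
  · rw [if_neg h]
    have hle : (if i = Kp x then 2^(2*i+1) else 0) + (if i = Kp y then 2^(2*i+1) else 0)
        ≤ 2^(2*i+1) := by
      by_cases h1 : i = Kp x
      · rw [if_pos h1, if_neg (by omega)]; omega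
      · rw [if_neg h1]; split <;> omega
    omega

end AuxStmt6b

theorem stmt6 (β α : ℝ) (hβ : 2 < β) (hα : α ∈ Set.Ico (1 : ℝ) 2)
    (u v Kp : ℕ → ℕ) (φ : ℕ → ℝ) (hφ : PhiHyp u v φ) (hKp : KpHyp β Kp)
    (p q r s : ℕ)
    (hp : p.Prime) (hp4 : p % 4 = 1)
    (hq : q.Prime) (hq4 : q % 4 = 1)
    (hr : r.Prime) (hr4 : r % 4 = 1)
    (hs : s.Prime) (hs4 : s % 4 = 1) :
    (IsBad φ Kp α p q r s →
      tfun Kp p + tfun Kp q = tfun Kp r + tfun Kp s ∧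
      ∀ i : ℕ, 1 ≤ i →
        Blk φ Kp α i p + Blk φ Kp α i q = Blk φ Kp α i r + Blk φ Kp α i s) ∧
    ((tfun Kp p + tfun Kp q = tfun Kp r + tfun Kp s ∧
      ∀ i : ℕ, 1 ≤ i →
        Blk φ Kp α i p + Blk φ Kp α i q = Blk φ Kp α i r + Blk φ Kp α i s) →
      afun φ Kp α p + afun φ Kp α q = afun φ Kp α r + afun φ Kp α s) := by
  have hk1 : 2 < Kp p := (hKp p hp hp4).1
  have hk2 : 2 < Kp q := (hKp q hq hq4).1
  have hk3 : 2 < Kp r := (hKp r hr hr4).1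
  have hk4 : 2 < Kp s := (hKp s hs hs4).1
  set N := max (max (Kp p) (Kp q)) (max (Kp r) (Kp s)) + 1 with hNdef
  constructor
  · rintro ⟨hsum, hrp, hsr, hqs⟩
    have upper : ∀ x : ℕ, 1 ≤ Kp x → afun φ Kp α x < 2^(ggE (Kp x) + 2) := by
      intro x hx
      have h1 := afun_repE φ Kp α x (Kp x) le_rfl
      have h2 : ∑ i ∈ Finset.Icc 1 (Kp x), Blk φ Kp α i x * 2^(ffE i) < 2^(ffE (Kp x + 1)) :=
        sumltE _ _ (fun i hi => by
          have hb := blk_ltE φ Kp α i x (Finset.mem_Icc.mp hi).1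
          have h5 : (2:ℕ)^(2*i) ≤ 2^(2*i+2) := Nat.pow_le_pow_right (by norm_num) (by omega)
          omega)
      rw [ffE_succ_gg] at h2
      rw [h1, tfun_ggE]
      have e1 : (2:ℕ)^(ggE (Kp x) + 1) = 2 * 2^(ggE (Kp x)) := by rw [pow_succ]; ring
      have e2 : (2:ℕ)^(ggE (Kp x) + 2) = 4 * 2^(ggE (Kp x)) := by rw [pow_add]; ring
      omega
    have lower : ∀ x : ℕ, (2:ℕ)^(ggE (Kp x)) ≤ afun φ Kp α x := by
      intro x
      calc (2:ℕ)^(ggE (Kp x)) = tfun Kp x := (tfun_ggE Kp x).symm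
      _ ≤ afun φ Kp α x := Nat.le_add_left _ _
    have kmono : ∀ x y : ℕ, 1 ≤ Kp x → afun φ Kp α y ≤ afun φ Kp α x → Kp y ≤ Kp x := by
      intro x y hx hle
      by_contra hc
      have h1 : ggE (Kp x) + 4 ≤ ggE (Kp y) := ggE_mono (by omega)
      have h2 : (2:ℕ)^(ggE (Kp x) + 2) ≤ 2^(ggE (Kp y)) :=
        Nat.pow_le_pow_right (by norm_num) (by omega)
      have h3 := upper x hx
      have h4 := lower y
      omega
    have hKpr : Kp p = Kp r := by
      have hKrp : Kp r ≤ Kp p := kmono p r (by omega) (le_of_lt hrp)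
      by_contra hc
      have hlt : Kp r < Kp p := by omega
      have hKsr : Kp s ≤ Kp r := kmono r s (by omega) hsr
      have h1 : ggE (Kp r) + 4 ≤ ggE (Kp p) := ggE_mono hlt
      have h2 : afun φ Kp α r < 2^(ggE (Kp r) + 2) := upper r (by omega)
      have h3 : afun φ Kp α s < 2^(ggE (Kp s) + 2) := upper s (by omega)
      have h4 : ggE (Kp s) ≤ ggE (Kp r) := by
        have := Nat.pow_le_pow_left hKsr 2
        simp only [ggE]; omega
      have h5 : (2:ℕ)^(ggE (Kp s) + 2) ≤ 2^(ggE (Kp r) + 2) :=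
        Nat.pow_le_pow_right (by norm_num) (by omega)
      have h6 : (2:ℕ)^(ggE (Kp r) + 3) ≤ 2^(ggE (Kp p)) :=
        Nat.pow_le_pow_right (by norm_num) (by omega)
      have e3 : (2:ℕ)^(ggE (Kp r) + 3) = 2 * 2^(ggE (Kp r) + 2) := by rw [pow_succ]; ring
      have h7 := lower p
      omega
    have hsums :
        ∑ i ∈ Finset.Icc 1 N,
          (Blk φ Kp α i p + Blk φ Kp α i q + tdigE (Kp p) (Kp q) i) * 2^(ffE i) =
        ∑ i ∈ Finset.Icc 1 N,
          (Blk φ Kp α i r + Blk φ Kp α i s + tdigE (Kp r) (Kp s) i) * 2^(ffE i) := by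
      rw [← pair_repE φ Kp α p q N (by omega) (by omega) (by omega) (by omega),
          ← pair_repE φ Kp α r s N (by omega) (by omega) (by omega) (by omega)]
      exact hsum
    have hDeq : ∀ i ∈ Finset.Icc 1 N,
        Blk φ Kp α i p + Blk φ Kp α i q + tdigE (Kp p) (Kp q) i =
        Blk φ Kp α i r + Blk φ Kp α i s + tdigE (Kp r) (Kp s) i :=
      uniqE (fun i => Blk φ Kp α i p + Blk φ Kp α i q + tdigE (Kp p) (Kp q) i)
        (fun i => Blk φ Kp α i r + Blk φ Kp α i s + tdigE (Kp r) (Kp s) i) N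
        (fun i hi => pair_boundE φ Kp α p q i (Finset.mem_Icc.mp hi).1)
        (fun i hi => pair_boundE φ Kp α r s i (Finset.mem_Icc.mp hi).1)
        hsums
    have hqs_eq : Kp q = Kp s := by
      by_cases h1 : Kp p = Kp q <;> by_cases h2 : Kp r = Kp s
      · omega
      · exfalso
        have key := hDeq (Kp p) (Finset.mem_Icc.mpr ⟨by omega, by omega⟩)
        have b1 := blk_ltE φ Kp α (Kp p) p (by omega)
        have b2 := blk_ltE φ Kp α (Kp p) q (by omega)
        have e1 : (2:ℕ)^(2*(Kp p)+1) = 2 * 2^(2*(Kp p)) := by rw [pow_succ]; ring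
        unfold tdigE at key
        split_ifs at key <;> omega
      · exfalso
        have key := hDeq (Kp r) (Finset.mem_Icc.mpr ⟨by omega, by omega⟩)
        have b1 := blk_ltE φ Kp α (Kp r) r (by omega)
        have b2 := blk_ltE φ Kp α (Kp r) s (by omega)
        have e1 : (2:ℕ)^(2*(Kp r)+1) = 2 * 2^(2*(Kp r)) := by rw [pow_succ]; ring
        unfold tdigE at key
        split_ifs at key <;> omega
      · by_contra hne
        have key := hDeq (Kp q) (Finset.mem_Icc.mpr ⟨by omega, by omega⟩)
        have b1 := blk_ltE φ Kp α (Kp q) r (by omega)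
        have b2 := blk_ltE φ Kp α (Kp q) s (by omega)
        have e1 : (2:ℕ)^(2*(Kp q)+1) = 2 * 2^(2*(Kp q)) := by rw [pow_succ]; ring
        unfold tdigE at key
        split_ifs at key <;> omega
    constructor
    · rw [tfun_ggE, tfun_ggE, tfun_ggE, tfun_ggE, hKpr, hqs_eq]
    · intro i hi
      by_cases hiN : i ≤ N
      · have key := hDeq i (Finset.mem_Icc.mpr ⟨hi, hiN⟩)
        have tdeq : tdigE (Kp p) (Kp q) i = tdigE (Kp r) (Kp s) i := by
          unfold tdigE; rw [hKpr, hqs_eq]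
        omega
      · rw [blk_zeroE φ Kp α (show Kp p < i by omega),
            blk_zeroE φ Kp α (show Kp q < i by omega),
            blk_zeroE φ Kp α (show Kp r < i by omega),
            blk_zeroE φ Kp α (show Kp s < i by omega)]
  · rintro ⟨ht, hb⟩
    rw [afun_repE φ Kp α p N (by omega), afun_repE φ Kp α q N (by omega),
        afun_repE φ Kp α r N (by omega), afun_repE φ Kp α s N (by omega)]
    have hsum2 : ∑ i ∈ Finset.Icc 1 N, Blk φ Kp α i p * 2^(ffE i) +
        ∑ i ∈ Finset.Icc 1 N, Blk φ Kp α i q * 2^(ffE i) =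
        ∑ i ∈ Finset.Icc 1 N, Blk φ Kp α i r * 2^(ffE i) +
        ∑ i ∈ Finset.Icc 1 N, Blk φ Kp α i s * 2^(ffE i) := by
      rw [← Finset.sum_add_distrib, ← Finset.sum_add_distrib]
      apply Finset.sum_congr rfl
      intro i hi
      rw [← add_mul, ← add_mul, hb i (Finset.mem_Icc.mp hi).1]
    omega
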